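/- (The regression identity.) Let B, A, C be real matrices with B Aᵀ C B Aᵀ = B Aᵀ, let l ∈ ℝ^n, let z be an n×k matrix of link characteristics and β ∈ ℝ^k, and set u = z β. Suppose x̂ and λ satisfy the reduced first-order condition B(l ∘ u) = B(l ∘ F′(x̂)) − B Aᵀ λ. Define y = (I − B Aᵀ C) B (l ∘ F′(x̂)) and w = (I − B Aᵀ C) B (l ∘ z), where l ∘ z multiplies each row of z by the corresponding entry of l. Then y = w β. -/
import Mathlib


open Matrix

/-- The regression identity: with `u = z β`, `y = (I − BAᵀC) B (l ∘ F′(xhat))` and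
`w = (I − BAᵀC) B (l ∘ z)`, the reduced first-order condition implies `y = w β`. -/
theorem regression_identity {ι n p k : Type*}
    [Fintype ι] [Fintype n] [Fintype p] [Fintype k] [DecidableEq ι]
    (B : Matrix ι n ℝ) (A : Matrix p n ℝ) (C : Matrix p ι ℝ)
    (hC : B * Aᵀ * C * (B * Aᵀ) = B * Aᵀ)
    (l : n → ℝ) (z : Matrix n k ℝ) (β : k → ℝ)
    (F' : ℝ → ℝ) (xhat : n → ℝ) (lam : p → ℝ)
    (hfoc : B.mulVec (fun i => l i * z.mulVec β i) =
      B.mulVec (fun i => l i * F' (xhat i)) - (B * Aᵀ).mulVec lam) :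
    (1 - B * Aᵀ * C).mulVec (B.mulVec (fun i => l i * F' (xhat i))) =
      ((1 - B * Aᵀ * C) * B * Matrix.of (fun i j => l i * z i j)).mulVec β := by
  have h1 : (Matrix.of (fun i j => l i * z i j)).mulVec β
      = fun i => l i * z.mulVec β i := by
    funext i
    simp [Matrix.mulVec, dotProduct, Finset.mul_sum, mul_assoc]
  have h2 : ((1 - B * Aᵀ * C) * B * Matrix.of (fun i j => l i * z i j)).mulVec β
      = (1 - B * Aᵀ * C).mulVec (B.mulVec (fun i => l i * z.mulVec β i)) := by
    rw [← Matrix.mulVec_mulVec, ← Matrix.mulVec_mulVec, h1]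
  have h3 : (1 - B * Aᵀ * C).mulVec ((B * Aᵀ).mulVec lam) = 0 := by
    rw [Matrix.mulVec_mulVec, Matrix.sub_mul, Matrix.one_mul, hC, sub_self, Matrix.zero_mulVec]
  rw [h2, hfoc, Matrix.mulVec_sub, h3, sub_zero]
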